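/- For every ε > 0 there exists N such that every tournament T on n ≥ N vertices satisfies p(Tr_4, T) ≥ (2/3) · p(Tr_3, T)² − ε. -/

import Mathlib

/-- A tournament on `n` vertices: an irreflexive relation such that for every
pair of distinct vertices exactly one direction holds. -/
structure Tournament (n : ℕ) where
  rel : Fin n → Fin n → Bool
  irrefl : ∀ v, rel v v = false
  total : ∀ u v, u ≠ v → rel u v = !rel v u

/-- The transitive tournament `Tr_k`. -/
def Tr (k : ℕ) : Tournament k where
  rel i j := decide (i < j)
  irrefl v := by simp
  total u v h := by
    rcases h.lt_or_gt with h' | h'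
    · simp [h', not_lt_of_gt h']
    · simp [h', not_lt_of_gt h']

/-- The cyclic triangle. -/
def C3 : Tournament 3 where
  rel := ![![false, true, false], ![false, false, true], ![true, false, false]]
  irrefl := by decide
  total := by decide

/-- `W₄`: the non-transitive tournament on 4 vertices with a "winner". -/
def W4 : Tournament 4 where
  rel := ![![false, true, true, true], ![false, false, true, false],
           ![false, false, false, true], ![false, true, false, false]]
  irrefl := by decide
  total := by decide

/-- `L₄`: the non-transitive tournament on 4 vertices with a "loser". -/
def L4 : Tournament 4 where
  rel := ![![false, true, false, true], ![false, false, true, true],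
           ![true, false, false, true], ![false, false, false, false]]
  irrefl := by decide
  total := by decide

/-- `R₄`: the tournament on 4 vertices with out-degree sequence (1,1,2,2). -/
def R4 : Tournament 4 where
  rel := ![![false, true, true, false], ![false, false, true, true],
           ![false, false, false, true], ![true, false, false, false]]
  irrefl := by decide
  total := by decide

/-- Two tournaments on the same number of vertices are isomorphic if some
permutation of the vertices carries one arc relation to the other. -/
def Isomorphic {k : ℕ} (S T : Tournament k) : Prop :=
  ∃ e : Equiv.Perm (Fin k), ∀ i j, S.rel i j = T.rel (e i) (e j)

/-- The subtournament of `T` induced on the subset `A` is isomorphic to `S`. -/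
def IsoOn {k n : ℕ} (S : Tournament k) (T : Tournament n) (A : Finset (Fin n)) : Prop :=
  ∃ f : Fin k → Fin n, Function.Injective f ∧ Finset.univ.image f = A ∧
    ∀ i j, S.rel i j = T.rel (f i) (f j)

open scoped Classical in
/-- The number of `k`-element subsets of the vertex set of `T` whose induced
subtournament is isomorphic to `S` (where `S` has `k` vertices). -/
noncomputable def copyCount {k n : ℕ} (S : Tournament k) (T : Tournament n) : ℕ :=
  ((Finset.powersetCard k (Finset.univ : Finset (Fin n))).filter (IsoOn S T)).card

/-- The (unlabelled) density `p(S, T)`. -/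
noncomputable def density {k n : ℕ} (S : Tournament k) (T : Tournament n) : ℝ :=
  (copyCount S T : ℝ) / (n.choose k : ℝ)

/-- The number of automorphisms of a tournament. -/
def autCount {k : ℕ} (S : Tournament k) : ℕ :=
  (Finset.univ.filter
    (fun e : Equiv.Perm (Fin k) => ∀ i j, S.rel i j = S.rel (e i) (e j))).card

/-- A sequence of tournaments with growing vertex sets is quasi-random if every
fixed tournament `S` on `k` vertices appears with density tending to
`k! / (|Aut S| * 2^(k(k-1)/2))`. -/
def QuasiRandom {nn : ℕ → ℕ} (T : ∀ j, Tournament (nn j)) : Prop :=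
  ∀ (k : ℕ) (S : Tournament k),
    Filter.Tendsto (fun j => density S (T j)) Filter.atTop
      (nhds ((k.factorial : ℝ) / ((autCount S : ℝ) * 2 ^ (k * (k - 1) / 2))))

/-- `D(u,v) = #{w : u→w ∧ w→v}`. -/
def Dcount {n : ℕ} (T : Tournament n) (u v : Fin n) : ℕ :=
  (Finset.univ.filter (fun w => T.rel u w ∧ T.rel w v)).card

/-- `C(u,v) = #{w : v→w ∧ w→u}`. -/
def Ccount {n : ℕ} (T : Tournament n) (u v : Fin n) : ℕ :=
  (Finset.univ.filter (fun w => T.rel v w ∧ T.rel w u)).card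

/-- `I(u,v) = #{w : w→u ∧ w→v}`. -/
def Icount {n : ℕ} (T : Tournament n) (u v : Fin n) : ℕ :=
  (Finset.univ.filter (fun w => T.rel w u ∧ T.rel w v)).card

/-- `O(u,v) = #{w : u→w ∧ v→w}`. -/
def Ocount {n : ℕ} (T : Tournament n) (u v : Fin n) : ℕ :=
  (Finset.univ.filter (fun w => T.rel u w ∧ T.rel v w)).card

/-- The subset `A` induces a transitive subtournament of `T`. -/
def IsTransOn {n : ℕ} (T : Tournament n) (A : Finset (Fin n)) : Prop :=
  ∀ u ∈ A, ∀ v ∈ A, ∀ w ∈ A, T.rel u v → T.rel v w → T.rel u w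

open scoped Classical in
/-- `tr_m(T)`: the number of `m`-element subsets of the vertex set of `T`
inducing a transitive subtournament. -/
noncomputable def trCount (m : ℕ) {n : ℕ} (T : Tournament n) : ℕ :=
  ((Finset.powersetCard m (Finset.univ : Finset (Fin n))).filter (IsTransOn T)).card

/-- The subtournament of `T` induced on a subset `A` of its vertices. -/
noncomputable def induce {n : ℕ} (T : Tournament n) (A : Finset (Fin n)) :
    Tournament A.card where
  rel i j := T.rel (A.orderIsoOfFin rfl i) (A.orderIsoOfFin rfl j)
  irrefl i := T.irrefl _
  total i j h := T.total _ _ (fun hc => h ((A.orderIsoOfFin rfl).injective (Subtype.ext hc)))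

/-- The out-neighbourhood `N⁺(u)` of a vertex. -/
def outSet {n : ℕ} (T : Tournament n) (u : Fin n) : Finset (Fin n) :=
  Finset.univ.filter (fun w => T.rel u w)

/-- The out-degree of a vertex. -/
def outDeg {n : ℕ} (T : Tournament n) (v : Fin n) : ℕ :=
  (Finset.univ.filter (fun w => T.rel v w)).card

/-- The multiset of out-degrees of a tournament. -/
def outDegs {n : ℕ} (T : Tournament n) : Multiset ℕ :=
  Finset.univ.val.map (outDeg T)

/-- The arc relation of `T` is transitive. -/
def IsTransitiveT {k : ℕ} (S : Tournament k) : Prop :=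
  ∀ u v w, S.rel u v → S.rel v w → S.rel u w

section Helpers

variable {n : ℕ}

lemma ne_of_rel {T : Tournament n} {u v : Fin n} (h : T.rel u v = true) : u ≠ v := by
  rintro rfl; rw [T.irrefl] at h; exact Bool.false_ne_true h

lemma asymm_of_rel {T : Tournament n} {u v : Fin n} (h : T.rel u v = true) :
    T.rel v u = false := by
  rw [T.total v u (Ne.symm (ne_of_rel h)), h]; rfl

lemma isTransOn_mono (T : Tournament n) {A B : Finset (Fin n)} (hBA : B ⊆ A)
    (h : IsTransOn T A) : IsTransOn T B :=
  fun u hu v hv w hw => h u (hBA hu) v (hBA hv) w (hBA hw)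

lemma source_unique (T : Tournament n) {A : Finset (Fin n)} {s s' : Fin n}
    (hs : s ∈ A) (hs' : s' ∈ A)
    (h : ∀ b ∈ A, b ≠ s → T.rel s b = true)
    (h' : ∀ b ∈ A, b ≠ s' → T.rel s' b = true) : s = s' := by
  by_contra hne
  have h1 := h s' hs' (fun hc => hne hc.symm)
  have h2 := h' s hs hne
  rw [asymm_of_rel h1] at h2
  exact Bool.false_ne_true h2

lemma sink_unique (T : Tournament n) {A : Finset (Fin n)} {s s' : Fin n}
    (hs : s ∈ A) (hs' : s' ∈ A)
    (h : ∀ b ∈ A, b ≠ s → T.rel b s = true)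
    (h' : ∀ b ∈ A, b ≠ s' → T.rel b s' = true) : s = s' := by
  by_contra hne
  have h1 := h s' hs' (fun hc => hne hc.symm)
  have h2 := h' s hs hne
  rw [asymm_of_rel h2] at h1
  exact Bool.false_ne_true h1

lemma transOn_triple (T : Tournament n) {u w v : Fin n}
    (h1 : T.rel u w = true) (h2 : T.rel w v = true) (h3 : T.rel u v = true) :
    IsTransOn T {u, w, v} := by
  have n1 := asymm_of_rel h1
  have n2 := asymm_of_rel h2
  have n3 := asymm_of_rel h3
  have i1 := T.irrefl u
  have i2 := T.irrefl w
  have i3 := T.irrefl v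
  intro a ha b hb c hc hab hbc
  simp only [Finset.mem_insert, Finset.mem_singleton] at ha hb hc
  rcases ha with rfl | rfl | rfl <;> rcases hb with rfl | rfl | rfl <;>
    rcases hc with rfl | rfl | rfl <;> simp_all

lemma transOn_quad (T : Tournament n) {a b c d : Fin n}
    (hab : T.rel a b = true) (hac : T.rel a c = true) (had : T.rel a d = true)
    (hbc : T.rel b c = true) (hbd : T.rel b d = true) (hcd : T.rel c d = true) :
    IsTransOn T {a, b, c, d} := by
  have n1 := asymm_of_rel hab
  have n2 := asymm_of_rel hac
  have n3 := asymm_of_rel had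
  have n4 := asymm_of_rel hbc
  have n5 := asymm_of_rel hbd
  have n6 := asymm_of_rel hcd
  have i1 := T.irrefl a
  have i2 := T.irrefl b
  have i3 := T.irrefl c
  have i4 := T.irrefl d
  intro x hx y hy z hz hxy hyz
  simp only [Finset.mem_insert, Finset.mem_singleton] at hx hy hz
  rcases hx with rfl | rfl | rfl | rfl <;> rcases hy with rfl | rfl | rfl | rfl <;>
    rcases hz with rfl | rfl | rfl | rfl <;> simp_all

lemma exists_source (T : Tournament n) {A : Finset (Fin n)} (hne : A.Nonempty)
    (htr : IsTransOn T A) : ∃ s ∈ A, ∀ b ∈ A, b ≠ s → T.rel s b = true := by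
  classical
  induction A using Finset.induction_on with
  | empty => exact absurd hne (by simp)
  | @insert a B ha ih =>
    by_cases hB : B.Nonempty
    · obtain ⟨s, hsB, hs⟩ := ih hB (isTransOn_mono T (Finset.subset_insert a B) htr)
      by_cases hrel : T.rel a s = true
      · refine ⟨a, Finset.mem_insert_self _ _, ?_⟩
        intro b hb hba
        rcases Finset.mem_insert.mp hb with rfl | hbB
        · exact absurd rfl hba
        · by_cases hbs : b = s
          · subst hbs; exact hrel
          · exact htr a (Finset.mem_insert_self _ _) s (Finset.mem_insert_of_mem hsB)
              b (Finset.mem_insert_of_mem hbB) hrel (hs b hbB hbs)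
      · have hsa : T.rel s a = true := by
          rw [T.total s a (fun hc => ha (hc ▸ hsB))]
          simp [Bool.not_eq_true] at hrel
          rw [hrel]; rfl
        refine ⟨s, Finset.mem_insert_of_mem hsB, ?_⟩
        intro b hb hbs
        rcases Finset.mem_insert.mp hb with rfl | hbB
        · exact hsa
        · exact hs b hbB hbs
    · rw [Finset.not_nonempty_iff_eq_empty] at hB
      subst hB
      refine ⟨a, Finset.mem_insert_self _ _, ?_⟩
      intro b hb hba
      rcases Finset.mem_insert.mp hb with rfl | h
      · exact absurd rfl hba
      · simp at h

end Helpers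
section Helpers2

variable {n : ℕ}

lemma exists_chain (T : Tournament n) :
    ∀ (k : ℕ) {A : Finset (Fin n)}, A.card = k → IsTransOn T A →
    ∃ f : Fin k → Fin n, Function.Injective f ∧ Finset.univ.image f = A ∧
      ∀ i j : Fin k, i < j → T.rel (f i) (f j) = true := by
  intro k
  induction k with
  | zero =>
    intro A hA _
    refine ⟨Fin.elim0, fun i => i.elim0, ?_, fun i => i.elim0⟩
    rw [Finset.card_eq_zero.mp hA]
    simp
  | succ k ih =>
    intro A hA htr
    have hne : A.Nonempty := Finset.card_pos.mp (by omega)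
    obtain ⟨s, hsA, hs⟩ := exists_source T hne htr
    have hB : (A.erase s).card = k := by
      rw [Finset.card_erase_of_mem hsA, hA]; rfl
    obtain ⟨g, hginj, hgim, hgrel⟩ :=
      ih hB (isTransOn_mono T (Finset.erase_subset _ _) htr)
    have hgB : ∀ i, g i ∈ A.erase s := by
      intro i; rw [← hgim]; exact Finset.mem_image_of_mem g (Finset.mem_univ i)
    refine ⟨Fin.cases s g, ?_, ?_, ?_⟩
    · intro i j hij
      induction i using Fin.cases with
      | zero =>
        induction j using Fin.cases with
        | zero => rfl
        | succ j' =>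
          exfalso
          simp only [Fin.cases_zero, Fin.cases_succ] at hij
          exact (Finset.mem_erase.mp (hgB j')).1 hij.symm
      | succ i' =>
        induction j using Fin.cases with
        | zero =>
          exfalso
          simp only [Fin.cases_zero, Fin.cases_succ] at hij
          exact (Finset.mem_erase.mp (hgB i')).1 hij
        | succ j' =>
          simp only [Fin.cases_succ] at hij
          rw [hginj hij]
    · ext a
      simp only [Finset.mem_image, Finset.mem_univ, true_and]
      constructor
      · rintro ⟨i, rfl⟩
        induction i using Fin.cases with
        | zero => simpa using hsA
        | succ i' =>
          simp only [Fin.cases_succ]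
          exact (Finset.mem_erase.mp (hgB i')).2
      · intro ha
        by_cases h : a = s
        · exact ⟨0, by simp [h]⟩
        · have hm : a ∈ A.erase s := Finset.mem_erase.mpr ⟨h, ha⟩
          rw [← hgim] at hm
          obtain ⟨i, -, rfl⟩ := Finset.mem_image.mp hm
          exact ⟨i.succ, by simp⟩
    · intro i j hij
      induction i using Fin.cases with
      | zero =>
        induction j using Fin.cases with
        | zero => exact absurd hij (lt_irrefl _)
        | succ j' =>
          simp only [Fin.cases_zero, Fin.cases_succ]
          have := Finset.mem_erase.mp (hgB j')
          exact hs _ this.2 this.1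
      | succ i' =>
        induction j using Fin.cases with
        | zero => exact absurd hij (Fin.not_lt_zero _)
        | succ j' =>
          simp only [Fin.cases_succ]
          exact hgrel i' j' (Fin.succ_lt_succ_iff.mp hij)

lemma isoOn_tr_iff (T : Tournament n) {k : ℕ} {A : Finset (Fin n)} (hA : A.card = k) :
    IsoOn (Tr k) T A ↔ IsTransOn T A := by
  constructor
  · rintro ⟨f, hinj, him, hrel⟩ u hu v hv w hw huv hvw
    rw [← him] at hu hv hw
    obtain ⟨i, -, rfl⟩ := Finset.mem_image.mp hu
    obtain ⟨j, -, rfl⟩ := Finset.mem_image.mp hv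
    obtain ⟨l, -, rfl⟩ := Finset.mem_image.mp hw
    have hij : i < j := by
      have := (hrel i j).trans (show T.rel (f i) (f j) = true from huv)
      exact of_decide_eq_true this
    have hjl : j < l := by
      have := (hrel j l).trans (show T.rel (f j) (f l) = true from hvw)
      exact of_decide_eq_true this
    show T.rel (f i) (f l) = true
    rw [← hrel i l]
    exact decide_eq_true (hij.trans hjl)
  · intro htr
    obtain ⟨f, hinj, him, hrel⟩ := exists_chain T k hA htr
    refine ⟨f, hinj, him, ?_⟩
    intro i j
    show decide (i < j) = T.rel (f i) (f j)
    rcases lt_trichotomy i j with h | h | h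
    · rw [hrel i j h, decide_eq_true h]
    · subst h
      rw [T.irrefl, decide_eq_false (lt_irrefl i)]
    · rw [asymm_of_rel (hrel j i h), decide_eq_false (not_lt_of_gt h)]

lemma copyCount_tr (T : Tournament n) (k : ℕ) : copyCount (Tr k) T = trCount k T := by
  classical
  unfold copyCount trCount
  congr 1
  apply Finset.filter_congr
  intro A hA
  exact isoOn_tr_iff T (Finset.mem_powersetCard.mp hA).2

end Helpers2
section Helpers3

variable {n : ℕ}

/-- The set of arcs of a tournament. -/
def edges (T : Tournament n) : Finset (Fin n × Fin n) :=
  Finset.univ.filter (fun p => T.rel p.1 p.2)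

lemma mem_edges {T : Tournament n} {p : Fin n × Fin n} :
    p ∈ edges T ↔ T.rel p.1 p.2 = true := by
  simp [edges]

lemma edges_card_le (T : Tournament n) : (edges T).card ≤ n.choose 2 := by
  classical
  have hcard : ((Finset.univ : Finset (Fin n)).powersetCard 2).card = n.choose 2 := by
    simp [Finset.card_powersetCard]
  rw [← hcard]
  apply Finset.card_le_card_of_injOn (fun p => {p.1, p.2})
  · intro p hp
    rw [Finset.mem_coe, mem_edges] at hp
    rw [Finset.mem_coe, Finset.mem_powersetCard]
    refine ⟨Finset.subset_univ _, ?_⟩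
    rw [Finset.card_insert_of_notMem (by simp [ne_of_rel hp]), Finset.card_singleton]
  · intro p hp q hq hpq
    rw [Finset.mem_coe, mem_edges] at hp hq
    have hpq' : ({p.1, p.2} : Finset (Fin n)) = {q.1, q.2} := hpq
    have h1 : q.1 ∈ ({p.1, p.2} : Finset (Fin n)) := by rw [hpq']; simp
    have h2 : q.2 ∈ ({p.1, p.2} : Finset (Fin n)) := by rw [hpq']; simp
    simp only [Finset.mem_insert, Finset.mem_singleton] at h1 h2
    rcases h1 with h1 | h1
    · rcases h2 with h2 | h2
      · exact absurd (h1 ▸ h2 ▸ hq) (by simp [T.irrefl])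
      · exact Prod.ext h1.symm h2.symm ▸ rfl
    · rcases h2 with h2 | h2
      · rw [h1, h2] at hq
        rw [asymm_of_rel hp] at hq
        exact absurd hq Bool.false_ne_true
      · exact absurd (h1 ▸ h2 ▸ hq) (by simp [T.irrefl])

/-- Ordered transitive triples: ((source, sink), middle). -/
def trip (T : Tournament n) : Finset ((Fin n × Fin n) × Fin n) :=
  Finset.univ.filter (fun q => T.rel q.1.1 q.1.2 ∧ T.rel q.1.1 q.2 ∧ T.rel q.2 q.1.2)

lemma trip_card (T : Tournament n) :
    (trip T).card = ∑ p ∈ edges T, Dcount T p.1 p.2 := by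
  classical
  rw [Finset.card_eq_sum_card_fiberwise (f := Prod.fst) (t := edges T)
    (by intro q hq; rw [Finset.mem_coe] at hq; simp only [trip, Finset.mem_filter] at hq; exact mem_edges.mpr hq.2.1)]
  apply Finset.sum_congr rfl
  intro p hp
  rw [mem_edges] at hp
  unfold Dcount
  apply Finset.card_bij (fun q _ => q.2)
  · intro q hq
    simp only [trip, Finset.mem_filter, Finset.mem_univ, true_and] at hq
    obtain ⟨⟨h1, h2, h3⟩, h4⟩ := hq
    subst h4
    simp only [Finset.mem_filter, Finset.mem_univ, true_and]
    exact ⟨h2, h3⟩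
  · intro q1 h1 q2 h2 heq
    simp only [trip, Finset.mem_filter] at h1 h2
    exact Prod.ext (h1.2.trans h2.2.symm) heq
  · intro w hw
    simp only [Finset.mem_filter, Finset.mem_univ, true_and] at hw
    refine ⟨(p, w), ?_, rfl⟩
    simp only [trip, Finset.mem_filter, Finset.mem_univ, true_and]
    exact ⟨⟨hp, hw.1, hw.2⟩, trivial⟩

lemma trCount_three (T : Tournament n) : trCount 3 T = (trip T).card := by
  classical
  unfold trCount
  symm
  apply Finset.card_bij (fun q _ => ({q.1.1, q.2, q.1.2} : Finset (Fin n)))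
  · intro q hq
    simp only [trip, Finset.mem_filter, Finset.mem_univ, true_and] at hq
    obtain ⟨h1, h2, h3⟩ := hq
    simp only [Finset.mem_filter, Finset.mem_powersetCard]
    refine ⟨⟨Finset.subset_univ _, ?_⟩, transOn_triple T h2 h3 h1⟩
    rw [Finset.card_insert_of_notMem, Finset.card_insert_of_notMem, Finset.card_singleton]
    · simp [ne_of_rel h3]
    · simp [ne_of_rel h2, ne_of_rel h1]
  · rintro ⟨⟨u, v⟩, w⟩ h1 ⟨⟨u', v'⟩, w'⟩ h2 heq
    simp only [trip, Finset.mem_filter, Finset.mem_univ, true_and] at h1 h2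
    obtain ⟨huv, huw, hwv⟩ := h1
    obtain ⟨huv', huw', hwv'⟩ := h2
    simp only at heq
    have hmem : ∀ b, b ∈ ({u, w, v} : Finset (Fin n)) ↔ b ∈ ({u', w', v'} : Finset (Fin n)) := by
      intro b; rw [heq]
    have hsrc : ∀ b ∈ ({u, w, v} : Finset (Fin n)), b ≠ u → T.rel u b = true := by
      intro b hb hbu
      simp only [Finset.mem_insert, Finset.mem_singleton] at hb
      rcases hb with rfl | rfl | rfl
      · exact absurd rfl hbu
      · exact huw
      · exact huv
    have hsrc' : ∀ b ∈ ({u, w, v} : Finset (Fin n)), b ≠ u' → T.rel u' b = true := by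
      intro b hb hbu
      rw [hmem] at hb
      simp only [Finset.mem_insert, Finset.mem_singleton] at hb
      rcases hb with rfl | rfl | rfl
      · exact absurd rfl hbu
      · exact huw'
      · exact huv'
    have hu : u = u' := source_unique T (by simp) (by rw [hmem]; simp)
      hsrc hsrc'
    have hsnk : ∀ b ∈ ({u, w, v} : Finset (Fin n)), b ≠ v → T.rel b v = true := by
      intro b hb hbv
      simp only [Finset.mem_insert, Finset.mem_singleton] at hb
      rcases hb with rfl | rfl | rfl
      · exact huv
      · exact hwv
      · exact absurd rfl hbv
    have hsnk' : ∀ b ∈ ({u, w, v} : Finset (Fin n)), b ≠ v' → T.rel b v' = true := by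
      intro b hb hbv
      rw [hmem] at hb
      simp only [Finset.mem_insert, Finset.mem_singleton] at hb
      rcases hb with rfl | rfl | rfl
      · exact huv'
      · exact hwv'
      · exact absurd rfl hbv
    have hv : v = v' := sink_unique T (by simp) (by rw [hmem]; simp) hsnk hsnk'
    subst hu
    subst hv
    have hw : w = w' := by
      have hw'mem : w' ∈ ({u, w, v} : Finset (Fin n)) := by rw [hmem]; simp
      simp only [Finset.mem_insert, Finset.mem_singleton] at hw'mem
      rcases hw'mem with h | h | h
      · rw [h, T.irrefl] at huw'
        exact absurd huw' Bool.false_ne_true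
      · exact h.symm
      · rw [h, T.irrefl] at hwv'
        exact absurd hwv' Bool.false_ne_true
    rw [hw]
  · intro A hA
    simp only [Finset.mem_filter, Finset.mem_powersetCard] at hA
    obtain ⟨⟨-, hcard⟩, htr⟩ := hA
    obtain ⟨f, hinj, him, hrel⟩ := exists_chain T 3 hcard htr
    refine ⟨((f 0, f 2), f 1), ?_, ?_⟩
    · simp only [trip, Finset.mem_filter, Finset.mem_univ, true_and]
      exact ⟨hrel 0 2 (by decide), hrel 0 1 (by decide), hrel 1 2 (by decide)⟩
    · rw [← him]
      have huniv : (Finset.univ : Finset (Fin 3)) = {0, 1, 2} := by decide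
      rw [huniv]
      simp only [Finset.image_insert, Finset.image_singleton]

end Helpers3
section Helpers4

variable {n : ℕ}

lemma sum_choose_le_trCount_four (T : Tournament n) :
    ∑ p ∈ edges T, (Dcount T p.1 p.2).choose 2 ≤ trCount 4 T := by
  classical
  have hsig : ∑ p ∈ edges T, (Dcount T p.1 p.2).choose 2 =
      ((edges T).sigma (fun p => Finset.powersetCard 2
        (Finset.univ.filter (fun w => T.rel p.1 w ∧ T.rel w p.2)))).card := by
    rw [Finset.card_sigma]
    apply Finset.sum_congr rfl
    intro p _
    rw [Finset.card_powersetCard]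
    rfl
  rw [hsig]
  unfold trCount
  apply Finset.card_le_card_of_injOn (fun q => insert q.1.1 (insert q.1.2 q.2))
  · rintro ⟨⟨u, v⟩, P⟩ hq
    simp only [Finset.mem_coe, Finset.mem_sigma, Finset.mem_powersetCard] at hq
    obtain ⟨he, hPsub, hPcard⟩ := hq
    rw [mem_edges] at he
    obtain ⟨w, x, hwx, rfl⟩ := Finset.card_eq_two.mp hPcard
    have hw := hPsub (by simp : w ∈ ({w, x} : Finset (Fin n)))
    have hx := hPsub (by simp : x ∈ ({w, x} : Finset (Fin n)))
    simp only [Finset.mem_filter, Finset.mem_univ, true_and] at hw hx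
    obtain ⟨huw, hwv⟩ := hw
    obtain ⟨hux, hxv⟩ := hx
    simp only [Finset.mem_coe, Finset.mem_filter, Finset.mem_powersetCard]
    constructor
    · refine ⟨Finset.subset_univ _, ?_⟩
      rw [Finset.card_insert_of_notMem, Finset.card_insert_of_notMem,
        Finset.card_insert_of_notMem (by simp [hwx]), Finset.card_singleton]
      · simp only [Finset.mem_insert, Finset.mem_singleton]
        push_neg
        exact ⟨Ne.symm (ne_of_rel hwv), Ne.symm (ne_of_rel hxv)⟩
      · simp only [Finset.mem_insert, Finset.mem_singleton]
        push_neg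
        exact ⟨ne_of_rel he, ne_of_rel huw, ne_of_rel hux⟩
    · rcases Bool.eq_false_or_eq_true (T.rel w x) with hdir | hdir
      rotate_left
      · have hxw : T.rel x w = true := by
          rw [T.total x w (Ne.symm hwx), hdir]; rfl
        have htr := transOn_quad T hux huw he hxw hxv hwv
        have hset : (insert u (insert v {w, x}) : Finset (Fin n)) = {u, x, w, v} := by
          ext b
          simp only [Finset.mem_insert, Finset.mem_singleton]
          tauto
        rw [hset]
        exact htr
      · have htr := transOn_quad T huw hux he hdir hwv hxv
        have hset : (insert u (insert v {w, x}) : Finset (Fin n)) = {u, w, x, v} := by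
          ext b
          simp only [Finset.mem_insert, Finset.mem_singleton]
          tauto
        rw [hset]
        exact htr
  · rintro ⟨⟨u, v⟩, P⟩ hq ⟨⟨u', v'⟩, P'⟩ hq' heq
    simp only [Finset.mem_coe, Finset.mem_sigma, Finset.mem_powersetCard] at hq hq'
    obtain ⟨he, hPsub, hPcard⟩ := hq
    obtain ⟨he', hPsub', hPcard'⟩ := hq'
    rw [mem_edges] at he he'
    have heq' : (insert u (insert v P) : Finset (Fin n)) = insert u' (insert v' P') := heq
    have hPrel : ∀ b ∈ P, T.rel u b = true ∧ T.rel b v = true := by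
      intro b hb
      have := hPsub hb
      simp only [Finset.mem_filter, Finset.mem_univ, true_and] at this
      exact this
    have hPrel' : ∀ b ∈ P', T.rel u' b = true ∧ T.rel b v' = true := by
      intro b hb
      have := hPsub' hb
      simp only [Finset.mem_filter, Finset.mem_univ, true_and] at this
      exact this
    have hsrc : ∀ b ∈ (insert u (insert v P) : Finset (Fin n)), b ≠ u → T.rel u b = true := by
      intro b hb hbu
      simp only [Finset.mem_insert] at hb
      rcases hb with rfl | rfl | hb
      · exact absurd rfl hbu
      · exact he
      · exact (hPrel b hb).1
    have hsrc' : ∀ b ∈ (insert u (insert v P) : Finset (Fin n)), b ≠ u' → T.rel u' b = true := by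
      intro b hb hbu
      rw [heq'] at hb
      simp only [Finset.mem_insert] at hb
      rcases hb with rfl | rfl | hb
      · exact absurd rfl hbu
      · exact he'
      · exact (hPrel' b hb).1
    have hsnk : ∀ b ∈ (insert u (insert v P) : Finset (Fin n)), b ≠ v → T.rel b v = true := by
      intro b hb hbv
      simp only [Finset.mem_insert] at hb
      rcases hb with rfl | rfl | hb
      · exact he
      · exact absurd rfl hbv
      · exact (hPrel b hb).2
    have hsnk' : ∀ b ∈ (insert u (insert v P) : Finset (Fin n)), b ≠ v' → T.rel b v' = true := by
      intro b hb hbv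
      rw [heq'] at hb
      simp only [Finset.mem_insert] at hb
      rcases hb with rfl | rfl | hb
      · exact he'
      · exact absurd rfl hbv
      · exact (hPrel' b hb).2
    have hu : u = u' := source_unique T (by simp) (by rw [heq']; simp) hsrc hsrc'
    have hv : v = v' := sink_unique T (by simp) (by rw [heq']; simp) hsnk hsnk'
    subst hu
    subst hv
    have hunm : u ∉ (insert v P : Finset (Fin n)) := by
      simp only [Finset.mem_insert]
      push_neg
      refine ⟨ne_of_rel he, ?_⟩
      intro hc
      have := (hPrel u hc).1
      rw [T.irrefl] at this
      exact Bool.false_ne_true this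
    have hvnm : v ∉ P := by
      intro hc
      have := (hPrel v hc).2
      rw [T.irrefl] at this
      exact Bool.false_ne_true this
    have hunm' : u ∉ (insert v P' : Finset (Fin n)) := by
      simp only [Finset.mem_insert]
      push_neg
      refine ⟨ne_of_rel he, ?_⟩
      intro hc
      have := (hPrel' u hc).1
      rw [T.irrefl] at this
      exact Bool.false_ne_true this
    have hvnm' : v ∉ P' := by
      intro hc
      have := (hPrel' v hc).2
      rw [T.irrefl] at this
      exact Bool.false_ne_true this
    have hP : P = P' := by
      have e1 : ((insert u (insert v P)).erase u).erase v = P := by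
        rw [Finset.erase_insert hunm, Finset.erase_insert hvnm]
      have e2 : ((insert u (insert v P')).erase u).erase v = P' := by
        rw [Finset.erase_insert hunm', Finset.erase_insert hvnm']
      rw [← e1, ← e2, heq']
    rw [hP]

lemma trCount_le_choose (m : ℕ) (T : Tournament n) : trCount m T ≤ n.choose m := by
  classical
  unfold trCount
  calc ((Finset.powersetCard m (Finset.univ : Finset (Fin n))).filter (IsTransOn T)).card
      ≤ (Finset.powersetCard m (Finset.univ : Finset (Fin n))).card :=
        Finset.card_filter_le _ _
    _ = n.choose m := by simp [Finset.card_powersetCard]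

lemma two_mul_choose_two (x : ℕ) : 2 * x.choose 2 = x * (x - 1) := by
  rw [Nat.choose_two_right]
  rcases x with _ | m
  · rfl
  · rw [Nat.succ_sub_one]
    exact Nat.mul_div_cancel' ((Nat.even_mul_succ_self m).two_dvd.mul_left 1 |>.trans (dvd_of_eq (by ring)))

lemma six_mul_choose_three (m : ℕ) : 6 * (m + 3).choose 3 = (m + 3) * (m + 2) * (m + 1) := by
  induction m with
  | zero => rfl
  | succ m ih =>
    have h2 : 2 * (m + 3).choose 2 = (m + 3) * (m + 2) := by
      have := two_mul_choose_two (m + 3)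
      simpa using this
    have hs : (m + 4).choose 3 = (m + 3).choose 2 + (m + 3).choose 3 :=
      Nat.choose_succ_succ _ _
    have h2' : (2 : ℤ) * ((m + 3).choose 2 : ℤ) = ((m : ℤ) + 3) * ((m : ℤ) + 2) := by
      exact_mod_cast h2
    have ih' : (6 : ℤ) * ((m + 3).choose 3 : ℤ) = ((m : ℤ) + 3) * ((m : ℤ) + 2) * ((m : ℤ) + 1) := by
      exact_mod_cast ih
    have hs' : ((m + 4).choose 3 : ℤ) = ((m + 3).choose 2 : ℤ) + ((m + 3).choose 3 : ℤ) := by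
      exact_mod_cast hs
    have key : (6 : ℤ) * ((m + 4).choose 3 : ℤ) = ((m : ℤ) + 4) * ((m : ℤ) + 3) * ((m : ℤ) + 2) := by
      linear_combination 3 * h2' + ih' + 6 * hs'
    exact_mod_cast key

lemma tf_mul_choose_four (m : ℕ) :
    24 * (m + 4).choose 4 = (m + 4) * (m + 3) * (m + 2) * (m + 1) := by
  induction m with
  | zero => rfl
  | succ m ih =>
    have h3 := six_mul_choose_three (m + 1)
    have hs : (m + 5).choose 4 = (m + 4).choose 3 + (m + 4).choose 4 :=
      Nat.choose_succ_succ _ _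
    have h3' : (6 : ℤ) * ((m + 4).choose 3 : ℤ) = ((m : ℤ) + 4) * ((m : ℤ) + 3) * ((m : ℤ) + 2) := by
      exact_mod_cast h3
    have ih' : (24 : ℤ) * ((m + 4).choose 4 : ℤ)
        = ((m : ℤ) + 4) * ((m : ℤ) + 3) * ((m : ℤ) + 2) * ((m : ℤ) + 1) := by
      exact_mod_cast ih
    have hs' : ((m + 5).choose 4 : ℤ) = ((m + 4).choose 3 : ℤ) + ((m + 4).choose 4 : ℤ) := by
      exact_mod_cast hs
    have key : (24 : ℤ) * ((m + 5).choose 4 : ℤ)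
        = ((m : ℤ) + 5) * ((m : ℤ) + 4) * ((m : ℤ) + 3) * ((m : ℤ) + 2) := by
      linear_combination 4 * h3' + ih' + 24 * hs'
    exact_mod_cast key

lemma choose_id34 (m : ℕ) : (m + 1) * (m + 4).choose 3 = 4 * (m + 4).choose 4 := by
  apply Nat.eq_of_mul_eq_mul_left (show 0 < 24 by norm_num)
  have h3 := six_mul_choose_three (m + 1)
  have h4 := tf_mul_choose_four m
  have h3' : (6 : ℤ) * ((m + 4).choose 3 : ℤ) = ((m : ℤ) + 4) * ((m : ℤ) + 3) * ((m : ℤ) + 2) := by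
    exact_mod_cast h3
  have h4' : (24 : ℤ) * ((m + 4).choose 4 : ℤ)
      = ((m : ℤ) + 4) * ((m : ℤ) + 3) * ((m : ℤ) + 2) * ((m : ℤ) + 1) := by
    exact_mod_cast h4
  have key : (24 : ℤ) * (((m : ℤ) + 1) * ((m + 4).choose 3 : ℤ))
      = (24 : ℤ) * ((4 : ℤ) * ((m + 4).choose 4 : ℤ)) := by
    linear_combination 4 * ((m : ℤ) + 1) * h3' - 4 * h4'
  exact_mod_cast key

lemma choose_ineq (m : ℕ) :
    4 * ((m + 4).choose 2) * ((m + 4).choose 4) ≤ 3 * ((m + 4).choose 3) ^ 2 := by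
  have h2 : 2 * (m + 4).choose 2 = (m + 4) * (m + 3) := by
    have := two_mul_choose_two (m + 4)
    simpa using this
  have h3 := six_mul_choose_three (m + 1)
  have h4 := tf_mul_choose_four m
  have key2 : ((m + 4) * (m + 3)) * ((m + 4) * (m + 3) * (m + 2) * (m + 1))
      ≤ ((m + 4) * (m + 3) * (m + 2)) * ((m + 4) * (m + 3) * (m + 2)) := by
    calc ((m + 4) * (m + 3)) * ((m + 4) * (m + 3) * (m + 2) * (m + 1))
        = ((m + 4) * (m + 4) * (m + 3) * (m + 3) * (m + 2)) * (m + 1) := by ring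
      _ ≤ ((m + 4) * (m + 4) * (m + 3) * (m + 3) * (m + 2)) * (m + 2) :=
          Nat.mul_le_mul_left _ (by omega)
      _ = ((m + 4) * (m + 3) * (m + 2)) * ((m + 4) * (m + 3) * (m + 2)) := by ring
  have key : 1152 * (4 * ((m + 4).choose 2) * ((m + 4).choose 4))
      ≤ 1152 * (3 * ((m + 4).choose 3) ^ 2) := by
    calc 1152 * (4 * ((m + 4).choose 2) * ((m + 4).choose 4))
        = 96 * ((2 * (m + 4).choose 2) * (24 * (m + 4).choose 4)) := by ring
      _ = 96 * (((m + 4) * (m + 3)) * ((m + 4) * (m + 3) * (m + 2) * (m + 1))) := by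
          rw [h2, h4]
      _ ≤ 96 * (((m + 4) * (m + 3) * (m + 2)) * ((m + 4) * (m + 3) * (m + 2))) :=
          Nat.mul_le_mul_left _ key2
      _ = 96 * ((6 * (m + 4).choose 3) * (6 * (m + 4).choose 3)) := by rw [h3]
      _ = 1152 * (3 * ((m + 4).choose 3) ^ 2) := by ring
  exact Nat.le_of_mul_le_mul_left key (by norm_num)

lemma choose_two_cast_ge (x : ℕ) : (x : ℝ) * ((x : ℝ) - 1) ≤ 2 * (x.choose 2 : ℝ) := by
  rcases x with _ | y
  · norm_num
  · have h := two_mul_choose_two (y + 1)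
    have h' : (2 : ℝ) * (((y + 1).choose 2 : ℕ) : ℝ) = ((y : ℝ) + 1) * (y : ℝ) := by
      rw [Nat.succ_sub_one] at h
      exact_mod_cast h
    push_cast
    nlinarith [h']

end Helpers4
/-- for every `ε > 0`, every sufficiently large tournament satisfies
`p(Tr_4, T) ≥ (2/3) · p(Tr_3, T)² - ε`. -/
theorem density_tr4_ge_tr3_sq (ε : ℝ) (hε : 0 < ε) :
    ∃ N : ℕ, ∀ n : ℕ, N ≤ n → ∀ T : Tournament n,
      2 / 3 * density (Tr 3) T ^ 2 - ε ≤ density (Tr 4) T := by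
  classical
  refine ⟨Nat.ceil ((2 : ℝ) / ε) + 5, ?_⟩
  intro n hn T
  obtain ⟨m, rfl⟩ : ∃ m, n = m + 4 := ⟨n - 4, by omega⟩
  obtain ⟨t3, ht3def⟩ : ∃ x : ℝ, x = (trCount 3 T : ℝ) := ⟨_, rfl⟩
  obtain ⟨t4, ht4def⟩ : ∃ x : ℝ, x = (trCount 4 T : ℝ) := ⟨_, rfl⟩
  obtain ⟨C2, hC2def⟩ : ∃ x : ℝ, x = (((m + 4).choose 2 : ℕ) : ℝ) := ⟨_, rfl⟩
  obtain ⟨C3, hC3def⟩ : ∃ x : ℝ, x = (((m + 4).choose 3 : ℕ) : ℝ) := ⟨_, rfl⟩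
  obtain ⟨C4, hC4def⟩ : ∃ x : ℝ, x = (((m + 4).choose 4 : ℕ) : ℝ) := ⟨_, rfl⟩
  have hc2pos : (0 : ℝ) < C2 := by
    rw [hC2def]; exact_mod_cast Nat.choose_pos (by omega)
  have hc3pos : (0 : ℝ) < C3 := by
    rw [hC3def]; exact_mod_cast Nat.choose_pos (by omega)
  have hc4pos : (0 : ℝ) < C4 := by
    rw [hC4def]; exact_mod_cast Nat.choose_pos (by omega)
  have ht3 : 0 ≤ t3 := by rw [ht3def]; positivity
  have ht4 : 0 ≤ t4 := by rw [ht4def]; positivity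
  have hsum : t3 = ∑ p ∈ edges T, (Dcount T p.1 p.2 : ℝ) := by
    rw [ht3def, trCount_three, trip_card]
    push_cast
    rfl
  obtain ⟨S2, hS2def⟩ : ∃ x : ℝ, x = ∑ p ∈ edges T, ((Dcount T p.1 p.2 : ℝ)) ^ 2 := ⟨_, rfl⟩
  have hS2 : 0 ≤ S2 := by rw [hS2def]; exact Finset.sum_nonneg (fun p _ => sq_nonneg _)
  have hCS : t3 ^ 2 ≤ C2 * S2 := by
    rw [hsum]
    calc (∑ p ∈ edges T, (Dcount T p.1 p.2 : ℝ)) ^ 2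
        ≤ ((edges T).card : ℝ) * ∑ p ∈ edges T, ((Dcount T p.1 p.2 : ℝ)) ^ 2 :=
          sq_sum_le_card_mul_sum_sq
      _ ≤ C2 * S2 := by
          rw [← hS2def]
          apply mul_le_mul_of_nonneg_right _ hS2
          rw [hC2def]
          exact_mod_cast edges_card_le T
  have hB : S2 - t3 ≤ 2 * t4 := by
    have h1 : ∀ p ∈ edges T, ((Dcount T p.1 p.2 : ℝ)) ^ 2 - (Dcount T p.1 p.2 : ℝ)
        ≤ 2 * ((Dcount T p.1 p.2).choose 2 : ℝ) := by
      intro p _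
      have h := choose_two_cast_ge (Dcount T p.1 p.2)
      nlinarith [h]
    have h2 : S2 - t3 ≤ ∑ p ∈ edges T, 2 * ((Dcount T p.1 p.2).choose 2 : ℝ) := by
      rw [hS2def, hsum, ← Finset.sum_sub_distrib]
      exact Finset.sum_le_sum h1
    have h3 : ∑ p ∈ edges T, 2 * ((Dcount T p.1 p.2).choose 2 : ℝ) ≤ 2 * t4 := by
      rw [← Finset.mul_sum]
      have h4 : (∑ p ∈ edges T, ((Dcount T p.1 p.2).choose 2 : ℝ)) ≤ t4 := by
        rw [ht4def]
        exact_mod_cast sum_choose_le_trCount_four T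
      linarith
    linarith
  have hC : 4 * C2 * C4 ≤ 3 * C3 ^ 2 := by
    rw [hC2def, hC3def, hC4def]
    exact_mod_cast choose_ineq m
  have hD : ((m : ℝ) + 1) * C3 = 4 * C4 := by
    rw [hC3def, hC4def]
    exact_mod_cast choose_id34 m
  have hE2 : t3 ≤ C3 := by
    rw [ht3def, hC3def]
    exact_mod_cast trCount_le_choose 3 T
  have hF : 2 ≤ ε * ((m : ℝ) + 1) := by
    have h1 : (2 : ℝ) / ε ≤ (Nat.ceil ((2 : ℝ) / ε) : ℝ) := Nat.le_ceil _
    have h2 : (Nat.ceil ((2 : ℝ) / ε) : ℝ) ≤ (m : ℝ) + 1 := by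
      have : Nat.ceil ((2 : ℝ) / ε) ≤ m + 1 := by omega
      exact_mod_cast this
    have h3 : (2 : ℝ) / ε ≤ (m : ℝ) + 1 := h1.trans h2
    calc (2 : ℝ) = ε * (2 / ε) := by field_simp
      _ ≤ ε * ((m : ℝ) + 1) := mul_le_mul_of_nonneg_left h3 hε.le
  have hC3le : C3 ≤ 2 * ε * C4 := by
    have h1 : ((m : ℝ) + 1) * C3 ≤ ((m : ℝ) + 1) * (2 * ε * C4) := by
      rw [hD]
      nlinarith [hF, hc4pos.le]
    exact le_of_mul_le_mul_left h1 (by positivity)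
  have s12 : t3 ^ 2 ≤ C2 * (2 * t4 + t3) :=
    hCS.trans (mul_le_mul_of_nonneg_left (by linarith) hc2pos.le)
  have key : 2 * t3 ^ 2 * C4 ≤ 3 * C3 ^ 2 * (t4 + ε * C4) := by
    have p0 : t3 ^ 2 * (2 * C4) ≤ (C2 * (2 * t4 + t3)) * (2 * C4) :=
      mul_le_mul_of_nonneg_right s12 (by positivity)
    have p1 : 0 ≤ (3 * C3 ^ 2 - 4 * C2 * C4) * t4 :=
      mul_nonneg (by linarith) ht4
    have p2 : 0 ≤ (3 * C3 ^ 2 - 4 * C2 * C4) * t3 :=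
      mul_nonneg (by linarith) ht3
    have p3 : 0 ≤ (2 * ε * C4 - C3) * C3 ^ 2 :=
      mul_nonneg (by linarith) (sq_nonneg _)
    have p4 : 0 ≤ (C3 - t3) * C3 ^ 2 :=
      mul_nonneg (by linarith) (sq_nonneg _)
    linarith [p0, p1, p2, p3, p4]
  rw [density, density, copyCount_tr, copyCount_tr, ← ht3def, ← ht4def, ← hC3def, ← hC4def]
  have hfin : (2 * t3 ^ 2) / (3 * C3 ^ 2) - ε ≤ (t4 + ε * C4) / C4 - ε := by
    apply sub_le_sub_right
    rw [div_le_div_iff₀ (by positivity) hc4pos]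
    linarith [key]
  calc 2 / 3 * (t3 / C3) ^ 2 - ε
      = (2 * t3 ^ 2) / (3 * C3 ^ 2) - ε := by rw [div_pow]; ring
    _ ≤ (t4 + ε * C4) / C4 - ε := hfin
    _ = t4 / C4 := by field_simp; ring
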